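/- arXiv:cs/0601036 — 2 statements merged into one kernel-verified Lean document; each statement's English description precedes it below -/
import Mathlib

section
/- Let D be a nonempty finite set of forbidden patterns such that no pattern in D contains the symbol 0. Then for every n ≥ 1 one has n · cap(D) ≤ log₂ δ_n(D) ≤ (n + 1) · cap(D). -/
/-- The integer value of a binary symbol. -/
def boolToInt (b : Bool) : ℤ := if b then 1 else 0

/-- Componentwise difference of two binary words, a word over `{-1, 0, +1}`. -/
def diffWord (u v : List Bool) : List ℤ :=
  List.zipWith (fun a b => boolToInt a - boolToInt b) u v

/-- A forbidden pattern: a nonempty finite word over the alphabet `{-1, 0, +1}`. -/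
def IsPattern (p : List ℤ) : Prop :=
  p ≠ [] ∧ ∀ x ∈ p, x = -1 ∨ x = 0 ∨ x = 1

/-- A code `C` of binary words avoids the forbidden set `D` if no difference of two
distinct code words contains a pattern of `D` as a contiguous subword (factor). -/
def AvoidsCode (D : Finset (List ℤ)) (C : Finset (List Bool)) : Prop :=
  ∀ u ∈ C, ∀ v ∈ C, u ≠ v → ∀ p ∈ D, ¬ p <:+: diffWord u v

/-- `delta D n` : the maximal cardinality of a code of binary words of length `n`
avoiding the forbidden set `D`. -/
noncomputable def delta (D : Finset (List ℤ)) (n : ℕ) : ℕ :=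
  sSup {k : ℕ | ∃ C : Finset (List Bool),
    (∀ u ∈ C, u.length = n) ∧ AvoidsCode D C ∧ C.card = k}

/-- The capacity of a set of forbidden difference patterns. -/
noncomputable def cap (D : Finset (List ℤ)) : ℝ :=
  Filter.limsup (fun n : ℕ => Real.logb 2 (delta D n) / n) Filter.atTop

-- the defining set
def deltaSet (D : Finset (List ℤ)) (n : ℕ) : Set ℕ :=
  {k : ℕ | ∃ C : Finset (List Bool),
    (∀ u ∈ C, u.length = n) ∧ AvoidsCode D C ∧ C.card = k}

lemma delta_eq (D : Finset (List ℤ)) (n : ℕ) : delta D n = sSup (deltaSet D n) := rfl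

lemma card_le_two_pow {n : ℕ} {C : Finset (List Bool)} (hC : ∀ u ∈ C, u.length = n) :
    C.card ≤ 2 ^ n := by
  have h := Finset.card_le_card_of_injOn (s := C) (t := Finset.univ)
    (fun (u : List Bool) (i : Fin n) => u.getD i false)
    (fun u _ => Finset.mem_univ _) ?_
  · simpa using h.trans_eq (by simp [Finset.card_univ])
  · intro u hu v hv huv
    apply List.ext_getElem (by rw [hC u hu, hC v hv])
    intro i h1 h2
    have : i < n := by rwa [hC u hu] at h1
    have := congrFun huv ⟨i, this⟩
    simpa [List.getD_eq_getElem, h1, h2] using this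

lemma bddAbove_deltaSet (D : Finset (List ℤ)) (n : ℕ) : BddAbove (deltaSet D n) := by
  refine ⟨2 ^ n, fun k hk => ?_⟩
  obtain ⟨C, h1, _, h3⟩ := hk
  exact h3 ▸ card_le_two_pow h1

lemma one_mem_deltaSet (D : Finset (List ℤ)) (n : ℕ) : 1 ∈ deltaSet D n := by
  refine ⟨{List.replicate n false}, ?_, ?_, by simp⟩
  · intro u hu; simp at hu; simp [hu]
  · intro u hu v hv huv; simp at hu hv; exact absurd (hu.trans hv.symm) huv

lemma one_le_delta (D : Finset (List ℤ)) (n : ℕ) : 1 ≤ delta D n :=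
  le_csSup (bddAbove_deltaSet D n) (one_mem_deltaSet D n)

lemma delta_le_two_pow (D : Finset (List ℤ)) (n : ℕ) : delta D n ≤ 2 ^ n :=
  csSup_le ⟨1, one_mem_deltaSet D n⟩ (fun k hk => by
    obtain ⟨C, h1, _, h3⟩ := hk; exact h3 ▸ card_le_two_pow h1)

lemma delta_mem (D : Finset (List ℤ)) (n : ℕ) : delta D n ∈ deltaSet D n :=
  Nat.sSup_mem ⟨1, one_mem_deltaSet D n⟩ (bddAbove_deltaSet D n)

lemma mem_deltaSet_le (D : Finset (List ℤ)) (n : ℕ) {C : Finset (List Bool)}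
    (h1 : ∀ u ∈ C, u.length = n) (h2 : AvoidsCode D C) : C.card ≤ delta D n :=
  le_csSup (bddAbove_deltaSet D n) ⟨C, h1, h2, rfl⟩

lemma diffWord_take (u v : List Bool) (m : ℕ) :
    diffWord (u.take m) (v.take m) = (diffWord u v).take m :=
  (List.take_zipWith).symm

lemma diffWord_drop (u v : List Bool) (m : ℕ) :
    diffWord (u.drop m) (v.drop m) = (diffWord u v).drop m :=
  (List.drop_zipWith).symm

lemma diffWord_append (a b c d : List Bool) (h : a.length = c.length) :
    diffWord (a ++ b) (c ++ d) = diffWord a c ++ diffWord b d :=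
  List.zipWith_append h

-- submultiplicativity
lemma delta_add_le (D : Finset (List ℤ)) (m n : ℕ) :
    delta D (m + n) ≤ delta D m * delta D n := by
  obtain ⟨C, hlen, havoid, hcard⟩ := delta_mem D (m + n)
  set C1 := C.image (List.take m) with hC1
  set C2 := C.image (List.drop m) with hC2
  have hC1len : ∀ u ∈ C1, u.length = m := by
    intro u hu; simp only [hC1, Finset.mem_image] at hu
    obtain ⟨w, hw, rfl⟩ := hu
    simp [hlen w hw]
  have hC2len : ∀ u ∈ C2, u.length = n := by
    intro u hu; simp only [hC2, Finset.mem_image] at hu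
    obtain ⟨w, hw, rfl⟩ := hu
    simp [hlen w hw]
  have hC1av : AvoidsCode D C1 := by
    intro a ha b hb hab p hp hinf
    simp only [hC1, Finset.mem_image] at ha hb
    obtain ⟨u, hu, rfl⟩ := ha; obtain ⟨v, hv, rfl⟩ := hb
    have huv : u ≠ v := fun h => hab (by rw [h])
    exact havoid u hu v hv huv p hp
      (hinf.trans ((diffWord_take u v m ▸ List.take_prefix m (diffWord u v)).isInfix))
  have hC2av : AvoidsCode D C2 := by
    intro a ha b hb hab p hp hinf
    simp only [hC2, Finset.mem_image] at ha hb
    obtain ⟨u, hu, rfl⟩ := ha; obtain ⟨v, hv, rfl⟩ := hb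
    have huv : u ≠ v := fun h => hab (by rw [h])
    exact havoid u hu v hv huv p hp
      (hinf.trans ((diffWord_drop u v m ▸ List.drop_suffix m (diffWord u v)).isInfix))
  have hinj : C.card ≤ C1.card * C2.card := by
    rw [← Finset.card_product]
    apply Finset.card_le_card_of_injOn (fun u => (u.take m, u.drop m))
    · intro u hu
      exact Finset.mem_product.2 ⟨Finset.mem_image_of_mem _ hu, Finset.mem_image_of_mem _ hu⟩
    · intro u _ v _ h
      have h1 : u.take m = v.take m := congrArg Prod.fst h
      have h2 : u.drop m = v.drop m := congrArg Prod.snd h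
      rw [← List.take_append_drop m u, ← List.take_append_drop m v, h1, h2]
  calc delta D (m + n) = C.card := hcard.symm
    _ ≤ C1.card * C2.card := hinj
    _ ≤ delta D m * delta D n :=
        Nat.mul_le_mul (mem_deltaSet_le D m hC1len hC1av) (mem_deltaSet_le D n hC2len hC2av)

lemma infix_split {p d1 d2 : List ℤ} {x : ℤ} (hinf : p <:+: d1 ++ x :: d2) (hx : x ∉ p) :
    p <:+: d1 ∨ p <:+: d2 := by
  obtain ⟨s, t, hl⟩ := hinf
  rcases le_or_gt (s.length + p.length) d1.length with hle | hgt
  · left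
    have hp1 : s ++ p <+: d1 ++ x :: d2 := ⟨t, hl⟩
    have hp2 : d1 <+: d1 ++ x :: d2 := ⟨x :: d2, rfl⟩
    have := List.prefix_of_prefix_length_le hp1 hp2 (by simpa using hle)
    have hsp : p <:+: s ++ p := ⟨s, [], by simp⟩
    exact hsp.trans this.isInfix
  rcases le_or_gt (d1.length + 1) s.length with hge | hlt
  · right
    have hs1 : p ++ t <:+ d1 ++ x :: d2 := ⟨s, by rw [← List.append_assoc, hl]⟩
    have hs2 : d2 <:+ d1 ++ x :: d2 := ⟨d1 ++ [x], by simp⟩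
    have hlen : (p ++ t).length ≤ d2.length := by
      have := congrArg List.length hl
      simp only [List.length_append, List.length_cons] at this ⊢
      omega
    have := List.suffix_of_suffix_length_le hs1 hs2 hlen
    have hpt : p <:+: p ++ t := ⟨[], t, by simp⟩
    exact hpt.trans this.isInfix
  · exfalso
    apply hx
    have hi : d1.length - s.length < p.length := by omega
    have hwlen : d1.length < (s ++ (p ++ t)).length := by
      simp only [List.length_append]; omega
    have h1 : (s ++ (p ++ t))[d1.length]'hwlen = p[d1.length - s.length]'hi := by
      rw [List.getElem_append_right (by omega)]
      rw [List.getElem_append_left (by omega)]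
    have h2 : (d1 ++ x :: d2)[d1.length]'(by simp) = x := by
      rw [List.getElem_append_right (le_refl _)]
      simp
    have hl' : s ++ (p ++ t) = d1 ++ x :: d2 := by rw [← List.append_assoc]; exact hl
    have : p[d1.length - s.length]'hi = x := by
      rw [← h1]; rw [← h2]; congr 1
    exact this ▸ List.getElem_mem hi

lemma diffWord_self (u : List Bool) : diffWord u u = List.replicate u.length 0 := by
  induction u with
  | nil => rfl
  | cons h t ih => simpa [diffWord, List.replicate_succ] using ih

lemma not_infix_diffWord_self {p : List ℤ} (hne : p ≠ [])
    (hpm : ∀ x ∈ p, x = -1 ∨ x = 1) (u : List Bool) : ¬ p <:+: diffWord u u := by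
  intro h
  rw [diffWord_self] at h
  obtain ⟨x, hx⟩ := List.exists_mem_of_ne_nil p hne
  have hx0 : x = 0 := List.eq_of_mem_replicate (h.subset hx)
  rcases hpm x hx with h1 | h1 <;> omega

lemma delta_superadd (D : Finset (List ℤ))
    (hD : ∀ p ∈ D, p ≠ [] ∧ ∀ x ∈ p, x = -1 ∨ x = 1) (m n : ℕ) :
    delta D m * delta D n ≤ delta D (m + n + 1) := by
  obtain ⟨C1, hlen1, hav1, hcard1⟩ := delta_mem D m
  obtain ⟨C2, hlen2, hav2, hcard2⟩ := delta_mem D n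
  set f : List Bool × List Bool → List Bool := fun q => q.1 ++ false :: q.2 with hf
  set C : Finset (List Bool) := (C1 ×ˢ C2).image f with hC
  have hinjOn : Set.InjOn f ↑(C1 ×ˢ C2) := by
    intro ⟨u, v⟩ hq ⟨u', v'⟩ hq' heq
    simp only [Finset.coe_product, Set.mem_prod, Finset.mem_coe] at hq hq'
    have hlen : u.length = u'.length := by
      rw [hlen1 u hq.1, hlen1 u' hq'.1]
    obtain ⟨h1, h2⟩ := List.append_inj heq hlen
    simp only [List.cons.injEq] at h2
    exact Prod.ext h1 h2.2
  have hClen : ∀ w ∈ C, w.length = m + n + 1 := by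
    intro w hw
    simp only [hC, Finset.mem_image] at hw
    obtain ⟨⟨u, v⟩, hq, rfl⟩ := hw
    rw [Finset.mem_product] at hq
    simp [hf, hlen1 u hq.1, hlen2 v hq.2]; omega
  have hCav : AvoidsCode D C := by
    intro a ha b hb hab p hp hinf
    simp only [hC, Finset.mem_image] at ha hb
    obtain ⟨⟨u, v⟩, hq, rfl⟩ := ha
    obtain ⟨⟨u', v'⟩, hq', rfl⟩ := hb
    rw [Finset.mem_product] at hq hq'
    have hdiff : diffWord (f (u, v)) (f (u', v')) =
        diffWord u u' ++ (0 : ℤ) :: diffWord v v' := by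
      simp only [hf]
      rw [diffWord_append u (false :: v) u' (false :: v')
        (by rw [hlen1 u hq.1, hlen1 u' hq'.1])]
      simp [diffWord, boolToInt]
    rw [hdiff] at hinf
    have h0p : (0 : ℤ) ∉ p := by
      intro h
      rcases (hD p hp).2 0 h with h1 | h1 <;> omega
    rcases infix_split hinf h0p with h | h
    · rcases eq_or_ne u u' with rfl | hne
      · exact not_infix_diffWord_self (hD p hp).1 (hD p hp).2 u h
      · exact hav1 u hq.1 u' hq'.1 hne p hp h
    · rcases eq_or_ne v v' with rfl | hne
      · exact not_infix_diffWord_self (hD p hp).1 (hD p hp).2 v h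
      · exact hav2 v hq.2 v' hq'.2 hne p hp h
  have hcard : C.card = delta D m * delta D n := by
    rw [hC, Finset.card_image_of_injOn hinjOn, Finset.card_product, hcard1, hcard2]
  calc delta D m * delta D n = C.card := hcard.symm
    _ ≤ delta D (m + n + 1) := mem_deltaSet_le D (m + n + 1) hClen hCav

section Analysis

variable (D : Finset (List ℤ))

noncomputable def aa (n : ℕ) : ℝ := Real.logb 2 (delta D n)

lemma aa_nonneg (n : ℕ) : 0 ≤ aa D n :=
  Real.logb_nonneg one_lt_two (by exact_mod_cast one_le_delta D n)

lemma aa_le (n : ℕ) : aa D n ≤ n := by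
  have hpos : (0:ℝ) < delta D n := by exact_mod_cast one_le_delta D n
  have h1 : (delta D n : ℝ) ≤ 2 ^ n := by exact_mod_cast delta_le_two_pow D n
  have h2 : Real.logb 2 (delta D n) ≤ Real.logb 2 (2 ^ n) :=
    Real.logb_le_logb_of_le one_lt_two hpos h1
  calc aa D n ≤ Real.logb 2 (2 ^ n) := h2
    _ = n := by rw [Real.logb_pow, Real.logb_self_eq_one one_lt_two]; ring

lemma aa_subadd (m n : ℕ) : aa D (m + n) ≤ aa D m + aa D n := by
  have hpos : (0:ℝ) < delta D m := by exact_mod_cast one_le_delta D m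
  have hpos' : (0:ℝ) < delta D n := by exact_mod_cast one_le_delta D n
  have h1 : (delta D (m + n) : ℝ) ≤ (delta D m : ℝ) * delta D n := by
    exact_mod_cast delta_add_le D m n
  have hpos'' : (0:ℝ) < delta D (m + n) := by exact_mod_cast one_le_delta D (m + n)
  calc aa D (m + n) ≤ Real.logb 2 ((delta D m : ℝ) * delta D n) :=
        Real.logb_le_logb_of_le one_lt_two hpos'' h1
    _ = aa D m + aa D n := Real.logb_mul hpos.ne' hpos'.ne'

lemma aa_superadd (hD : ∀ p ∈ D, p ≠ [] ∧ ∀ x ∈ p, x = -1 ∨ x = 1) (m n : ℕ) :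
    aa D m + aa D n ≤ aa D (m + n + 1) := by
  have hpos : (0:ℝ) < delta D m := by exact_mod_cast one_le_delta D m
  have hpos' : (0:ℝ) < delta D n := by exact_mod_cast one_le_delta D n
  have h1 : (delta D m : ℝ) * delta D n ≤ (delta D (m + n + 1) : ℝ) := by
    exact_mod_cast delta_superadd D hD m n
  calc aa D m + aa D n = Real.logb 2 ((delta D m : ℝ) * delta D n) :=
        (Real.logb_mul hpos.ne' hpos'.ne').symm
    _ ≤ aa D (m + n + 1) := Real.logb_le_logb_of_le one_lt_two (by positivity) h1


end Analysis

section Fekete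

variable (D : Finset (List ℤ))

lemma aa_mul_le (n q r : ℕ) : aa D (n * q + r) ≤ q * aa D n + aa D r := by
  induction q with
  | zero => simp
  | succ q ih =>
    have : n * (q + 1) + r = n + (n * q + r) := by ring
    rw [this]
    calc aa D (n + (n * q + r)) ≤ aa D n + aa D (n * q + r) := aa_subadd D n _
      _ ≤ aa D n + (q * aa D n + aa D r) := by linarith
      _ = (q + 1 : ℕ) * aa D n + aa D r := by push_cast; ring

lemma cap_le (n : ℕ) (hn : 1 ≤ n) :
    Filter.limsup (fun m : ℕ => aa D m / m) Filter.atTop ≤ aa D n / n := by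
  set u : ℕ → ℝ := fun m => aa D m / m with hu
  set v : ℕ → ℝ := fun m => aa D n / n + n / m with hv
  have hvlim : Filter.Tendsto v Filter.atTop (nhds (aa D n / n)) := by
    have := tendsto_const_div_atTop_nhds_zero_nat (n : ℝ)
    simpa using (tendsto_const_nhds (x := aa D n / n) (f := Filter.atTop)).add this
  have huv : ∀ᶠ m in Filter.atTop, u m ≤ v m := by
    filter_upwards [Filter.eventually_ge_atTop n, Filter.eventually_ge_atTop 1] with m hm hm1
    have hq1 : 1 ≤ m / n := (Nat.one_le_div_iff hn).2 hm
    have hmpos : (0:ℝ) < m := by exact_mod_cast hm1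
    have hnpos : (0:ℝ) < n := by exact_mod_cast hn
    have hdm : n * (m / n) + m % n = m := Nat.div_add_mod m n
    have h1 : aa D m ≤ (m / n : ℕ) * aa D n + aa D (m % n) := by
      conv_lhs => rw [← hdm]
      exact aa_mul_le D n (m / n) (m % n)
    have h2 : aa D (m % n) ≤ n := (aa_le D _).trans (by
      exact_mod_cast (Nat.mod_lt m hn).le)
    have h3 : aa D m ≤ (m / n : ℕ) * aa D n + n := by linarith
    have hqn : ((m / n : ℕ) : ℝ) * n ≤ m := by exact_mod_cast Nat.div_mul_le_self m n
    have key : ((m / n : ℕ) : ℝ) * aa D n / m ≤ aa D n / n := by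
      rw [div_le_div_iff₀ hmpos hnpos]
      calc ((m / n : ℕ) : ℝ) * aa D n * n = ((m / n : ℕ) : ℝ) * n * aa D n := by ring
        _ ≤ m * aa D n := mul_le_mul_of_nonneg_right hqn (aa_nonneg D n)
        _ = aa D n * m := by ring
    calc u m = aa D m / m := rfl
      _ ≤ (((m / n : ℕ) : ℝ) * aa D n + n) / m := by
          exact div_le_div_of_nonneg_right h3 hmpos.le
      _ = ((m / n : ℕ) : ℝ) * aa D n / m + n / m := by ring
      _ ≤ aa D n / n + n / m := by linarith
  have hcu : Filter.IsCoboundedUnder (· ≤ ·) Filter.atTop u :=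
    Filter.isCoboundedUnder_le_of_eventually_le Filter.atTop
      (x := 0) (Filter.Eventually.of_forall fun m => by
        exact div_nonneg (aa_nonneg D m) (Nat.cast_nonneg m))
  have hbv : Filter.IsBoundedUnder (· ≤ ·) Filter.atTop v := hvlim.isBoundedUnder_le
  calc Filter.limsup u Filter.atTop ≤ Filter.limsup v Filter.atTop :=
        Filter.limsup_le_limsup huv hcu hbv
    _ = aa D n / n := hvlim.limsup_eq

lemma mul_le_aa (hD : ∀ p ∈ D, p ≠ [] ∧ ∀ x ∈ p, x = -1 ∨ x = 1) (n : ℕ) (hn : 1 ≤ n)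
    (k : ℕ) (hk : 1 ≤ k) : (k : ℝ) * aa D n ≤ aa D ((n + 1) * k - 1) := by
  induction k, hk using Nat.le_induction with
  | base => simp
  | succ k hk ih =>
    have harith : (n + 1) * (k + 1) - 1 = ((n + 1) * k - 1) + n + 1 := by
      have h0 : 1 ≤ (n + 1) * k := Nat.one_le_iff_ne_zero.2 (by positivity)
      have h1 : (n + 1) * (k + 1) = (n + 1) * k + (n + 1) := by ring
      omega
    rw [harith]
    calc ((k + 1 : ℕ) : ℝ) * aa D n = (k : ℝ) * aa D n + aa D n := by push_cast; ring
      _ ≤ aa D ((n + 1) * k - 1) + aa D n := by linarith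
      _ ≤ aa D (((n + 1) * k - 1) + n + 1) := aa_superadd D hD _ n

lemma le_cap (hD : ∀ p ∈ D, p ≠ [] ∧ ∀ x ∈ p, x = -1 ∨ x = 1) (n : ℕ) (hn : 1 ≤ n) :
    aa D n / (n + 1) ≤ Filter.limsup (fun m : ℕ => aa D m / m) Filter.atTop := by
  set u : ℕ → ℝ := fun m => aa D m / m with hu
  have hbdd : Filter.IsBoundedUnder (· ≤ ·) Filter.atTop u := by
    refine Filter.isBoundedUnder_of ⟨1, fun m => ?_⟩
    rcases Nat.eq_zero_or_pos m with rfl | hm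
    · simp [hu]
    · have hmpos : (0:ℝ) < m := by exact_mod_cast hm
      exact div_le_one_of_le₀ ((aa_le D m)) hmpos.le
  apply Filter.le_limsup_of_frequently_le _ hbdd
  rw [Filter.frequently_atTop]
  intro N
  refine ⟨(n + 1) * (N + 1) - 1, ?_, ?_⟩
  · have h1 : 2 * (N + 1) ≤ (n + 1) * (N + 1) := Nat.mul_le_mul_right _ (by omega)
    omega
  · set k := N + 1 with hk
    set m := (n + 1) * k - 1 with hm
    have hk1 : 1 ≤ k := by omega
    have hm1 : 1 ≤ m := by
      have : 2 * k ≤ (n + 1) * k := Nat.mul_le_mul_right _ (by omega)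
      omega
    have hmpos : (0:ℝ) < m := by exact_mod_cast hm1
    have hmle : (m : ℝ) ≤ (n + 1) * k := by
      have : m ≤ (n + 1) * k := Nat.sub_le _ _
      exact_mod_cast this
    have h1 : (k : ℝ) * aa D n ≤ aa D m := mul_le_aa D hD n hn k hk1
    have hkpos : (0:ℝ) < k := by exact_mod_cast hk1
    have hn1pos : (0:ℝ) < (n:ℝ) + 1 := by positivity
    rw [div_le_div_iff₀ hn1pos hmpos]
    calc aa D n * m ≤ aa D n * ((n + 1) * k) :=
          mul_le_mul_of_nonneg_left (by exact_mod_cast hmle) (aa_nonneg D n)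
      _ = (k : ℝ) * aa D n * ((n:ℝ) + 1) := by push_cast; ring
      _ ≤ aa D m * ((n:ℝ) + 1) := mul_le_mul_of_nonneg_right h1 hn1pos.le

end Fekete



/-- if no pattern in `D` contains the symbol `0`, then
`n · cap(D) ≤ log₂ δ_n(D) ≤ (n+1) · cap(D)`. -/
theorem capacity_bounds_no_zero (D : Finset (List ℤ)) (hDne : D.Nonempty)
    (hD : ∀ p ∈ D, p ≠ [] ∧ ∀ x ∈ p, x = -1 ∨ x = 1)
    (n : ℕ) (hn : 1 ≤ n) :
    (n : ℝ) * cap D ≤ Real.logb 2 (delta D n) ∧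
    Real.logb 2 (delta D n) ≤ ((n : ℝ) + 1) * cap D := by
  have hcap : cap D = Filter.limsup (fun m : ℕ => aa D m / m) Filter.atTop := rfl
  have hnpos : (0:ℝ) < n := by exact_mod_cast hn
  constructor
  · have h := cap_le D n hn
    rw [← hcap] at h
    calc (n : ℝ) * cap D ≤ (n : ℝ) * (aa D n / n) :=
          mul_le_mul_of_nonneg_left h hnpos.le
      _ = aa D n := by field_simp
  · have h := le_cap D hD n hn
    rw [← hcap] at h
    have := (div_le_iff₀ (by positivity : (0:ℝ) < (n:ℝ) + 1)).1 h
    calc Real.logb 2 (delta D n) = aa D n := rfl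
      _ ≤ cap D * ((n:ℝ) + 1) := this
      _ = ((n : ℝ) + 1) * cap D := by ring
end

section
/- Let p be a single forbidden pattern of length m ≥ 1 over {−1, 0, +1} and let D = {p}. Then cap(D) = 0 if and only if p contains at least m−1 consecutive zeros (i.e., the word of m−1 zeros occurs as a contiguous subword of p). -/
-- ===== Part 1: basic delta facts =====

lemma diffWord_length (u v : List Bool) :
    (diffWord u v).length = min u.length v.length := by simp [diffWord]

lemma diffWord_getElem (u v : List Bool) (k : ℕ) (h : k < (diffWord u v).length) :
    (diffWord u v)[k] =
      boolToInt (u[k]'(by simp [diffWord_length] at h; omega))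
        - boolToInt (v[k]'(by simp [diffWord_length] at h; omega)) := by
  simp [diffWord]

lemma code_card_le {n : ℕ} {C : Finset (List Bool)} (h : ∀ u ∈ C, u.length = n) :
    C.card ≤ 3 ^ n := by
  classical
  calc C.card ≤ (Finset.univ : Finset (Fin n → Option Bool)).card := by
        apply Finset.card_le_card_of_injOn (fun u (i : Fin n) => u[(i : ℕ)]?)
        · intro u _; exact Finset.mem_univ _
        · intro u hu v hv huv
          apply List.ext_getElem (by rw [h u hu, h v hv])
          intro k h1 h2
          have hk : k < n := by rw [← h u hu]; exact h1
          have := congrFun huv ⟨k, hk⟩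
          simp only [List.getElem?_eq_getElem h1, List.getElem?_eq_getElem h2] at this
          exact Option.some_injective _ this
    _ = 3 ^ n := by
        simp [Finset.card_univ, Fintype.card_fun]
lemma delta_bddAbove (D : Finset (List ℤ)) (n : ℕ) :
    BddAbove {k : ℕ | ∃ C : Finset (List Bool),
      (∀ u ∈ C, u.length = n) ∧ AvoidsCode D C ∧ C.card = k} :=
  ⟨3 ^ n, fun k ⟨C, h1, _, h3⟩ => h3 ▸ code_card_le h1⟩

lemma le_delta (D : Finset (List ℤ)) (n : ℕ) (C : Finset (List Bool))
    (h1 : ∀ u ∈ C, u.length = n) (h2 : AvoidsCode D C) : C.card ≤ delta D n :=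
  le_csSup (delta_bddAbove D n) ⟨C, h1, h2, rfl⟩

lemma delta_le (D : Finset (List ℤ)) (n : ℕ) (K : ℕ)
    (h : ∀ C : Finset (List Bool), (∀ u ∈ C, u.length = n) → AvoidsCode D C → C.card ≤ K) :
    delta D n ≤ K := by
  have hne : (0:ℕ) ∈ {k : ℕ | ∃ C : Finset (List Bool),
      (∀ u ∈ C, u.length = n) ∧ AvoidsCode D C ∧ C.card = k} :=
    ⟨∅, by simp, by simp [AvoidsCode], by simp⟩
  apply csSup_le ⟨0, hne⟩
  rintro k ⟨C, h1, h2, rfl⟩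
  exact h C h1 h2

lemma delta_le_pow (D : Finset (List ℤ)) (n : ℕ) : delta D n ≤ 3 ^ n :=
  delta_le D n _ fun C h1 _ => code_card_le h1

-- ===== Part 2: getD-based helpers =====

lemma eq_of_getD {u v : List Bool} (h : u.length = v.length)
    (hall : ∀ k, u.getD k false = v.getD k false) : u = v := by
  apply List.ext_getElem h
  intro k h1 h2
  have := hall k
  rwa [List.getD_eq_getElem _ _ h1, List.getD_eq_getElem _ _ h2] at this

lemma diffWord_getD {u v : List Bool} (h : u.length = v.length) (k : ℕ) :
    (diffWord u v).getD k 0 = boolToInt (u.getD k false) - boolToInt (v.getD k false) := by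
  have hdl : (diffWord u v).length = u.length := by rw [diffWord_length]; omega
  by_cases hk : k < u.length
  · rw [List.getD_eq_getElem _ _ (by omega), List.getD_eq_getElem _ _ hk,
      List.getD_eq_getElem _ _ (by omega)]
    simp [diffWord]
  · rw [List.getD_eq_default _ _ (by omega), List.getD_eq_default _ _ (by omega),
      List.getD_eq_default _ _ (by omega)]
    simp [boolToInt]

lemma getD_of_infix {p l : List ℤ} (h : p <:+: l) :
    ∃ t₀, t₀ + p.length ≤ l.length ∧ ∀ j, j < p.length → l.getD (t₀ + j) 0 = p.getD j 0 := by
  obtain ⟨s, t, hst⟩ := h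
  have hl : l.length = s.length + p.length + t.length := by rw [← hst]; simp; omega
  refine ⟨s.length, by omega, ?_⟩
  intro j hj
  have h1 : s.length + j < l.length := by omega
  have h2 : s.length + j < (s ++ (p ++ t)).length := by simp; omega
  have h3 : j < (p ++ t).length := by simp; omega
  rw [List.getD_eq_getElem _ _ h1, List.getD_eq_getElem _ _ hj]
  have e1 : l[s.length + j]'h1 = (s ++ (p ++ t))[s.length + j]'h2 := by
    congr 1
    rw [← hst, List.append_assoc]
  rw [e1, List.getElem_append_right (by omega)]
  have e2 : s.length + j - s.length = j := by omega
  rw [List.getElem_eq_iff]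
  rw [e2, List.getElem?_append_left (by omega), List.getElem?_eq_getElem hj]

lemma infix_of_getD {p l : List ℤ} (t₀ : ℕ) (hle : t₀ + p.length ≤ l.length)
    (h : ∀ j, j < p.length → l.getD (t₀ + j) 0 = p.getD j 0) : p <:+: l := by
  have hp : p = (l.drop t₀).take p.length := by
    apply List.ext_getElem (by simp; omega)
    intro k h1 h2
    rw [List.getElem_take, List.getElem_drop]
    have := h k h1
    rw [List.getD_eq_getElem _ _ (by omega), List.getD_eq_getElem _ _ h1] at this
    exact this.symm
  rw [hp]
  exact ((l.drop t₀).take_prefix p.length).isInfix.trans (l.drop_suffix t₀).isInfix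

lemma suffpat_getD (m : ℕ) (hm : 1 ≤ m) (x : ℤ) (j : ℕ) (hj : j < m) :
    (List.replicate (m-1) (0:ℤ) ++ [x]).getD j 0 = if j = m - 1 then x else 0 := by
  have hl : (List.replicate (m-1) (0:ℤ) ++ [x]).length = m := by simp; omega
  rw [List.getD_eq_getElem _ _ (by omega)]
  by_cases hj' : j = m - 1
  · subst hj'
    rw [List.getElem_append_right (by simp)]
    simp
  · rw [List.getElem_append_left (by simp; omega)]
    simp [hj']

-- ===== suffix-pattern code bound =====

lemma card_le_of_avoids_suffix {x : ℤ} (hx : x = -1 ∨ x = 0 ∨ x = 1) {m : ℕ} (hm : 1 ≤ m)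
    {n : ℕ} {C : Finset (List Bool)} (hlen : ∀ u ∈ C, u.length = n)
    (hav : AvoidsCode {List.replicate (m-1) (0:ℤ) ++ [x]} C) : C.card ≤ 3 ^ m := by
  classical
  set p : List ℤ := List.replicate (m-1) (0:ℤ) ++ [x] with hpdef
  have hplen : p.length = m := by simp [hpdef]; omega
  calc C.card ≤ (Finset.univ : Finset (Fin m → Option Bool)).card := by
        apply Finset.card_le_card_of_injOn (fun u (i : Fin m) => u[(i : ℕ)]?)
        · intro u _; exact Finset.mem_univ _
        · intro u hu' v hv' huv
          have hu : u ∈ C := hu'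
          have hv : v ∈ C := hv'
          by_contra hne
          have hun : u.length = n := hlen u hu
          have hvn : v.length = n := hlen v hv
          have hagree : ∀ k, k < m → u.getD k false = v.getD k false := by
            intro k hk
            by_cases hkn : k < n
            · have h1 : k < u.length := by omega
              have h2 : k < v.length := by omega
              have := congrFun huv ⟨k, hk⟩
              simp only [List.getElem?_eq_getElem h1, List.getElem?_eq_getElem h2] at this
              rw [List.getD_eq_getElem _ _ h1, List.getD_eq_getElem _ _ h2]
              exact Option.some_injective _ this
            · rw [List.getD_eq_default _ _ (by omega), List.getD_eq_default _ _ (by omega)]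
          have hex : ∃ k, u.getD k false ≠ v.getD k false := by
            by_contra hall
            push_neg at hall
            exact hne (eq_of_getD (by omega) hall)
          set i := Nat.find hex with hidef
          have hi : u.getD i false ≠ v.getD i false := Nat.find_spec hex
          have himin : ∀ k, k < i → u.getD k false = v.getD k false := by
            intro k hk
            by_contra hk'
            have h2 : i ≤ k := Nat.find_le hk'
            omega
          have him : m ≤ i := by
            by_contra h'
            exact hi (hagree i (by omega))
          have hin : i < n := by
            by_contra h'
            apply hi
            rw [List.getD_eq_default _ _ (by omega), List.getD_eq_default _ _ (by omega)]
          have hdlen : (diffWord u v).length = n := by rw [diffWord_length]; omega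
          have hdzero : ∀ k, k < i → (diffWord u v).getD k 0 = 0 := by
            intro k hk
            rw [diffWord_getD (by omega), himin k hk, sub_self]
          have hepm : (diffWord u v).getD i 0 = 1 ∨ (diffWord u v).getD i 0 = -1 := by
            rw [diffWord_getD (by omega)]
            cases hub : u.getD i false <;> cases hvb : v.getD i false <;>
              simp_all [boolToInt]
          have hvu : ∀ k, (diffWord v u).getD k 0 = -((diffWord u v).getD k 0) := by
            intro k
            rw [diffWord_getD (by omega), diffWord_getD (by omega)]
            ring
          by_cases hx0 : x = 0
          · apply hav u hu v hv hne p (by simp)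
            apply infix_of_getD 0 (by omega)
            intro j hj
            rw [hplen] at hj
            rw [zero_add, hdzero j (by omega), hpdef, suffpat_getD m hm x j hj, hx0]
            simp
          · set t₀ := i - (m - 1) with ht₀
            have hit : t₀ + (m - 1) = i := by omega
            have hwin : t₀ + m ≤ n := by omega
            have key : ∀ (e : ℤ),
                ∀ w z, w ∈ C → z ∈ C → w ≠ z →
                (∀ k, k < p.length → (diffWord w z).getD (t₀ + k) 0
                    = (if k = m - 1 then e else 0)) → x = e → False := by
              intro e w z hw hz hwz hval hxe
              apply hav w hw z hz hwz p (by simp)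
              have hdl : (diffWord w z).length = n := by
                rw [diffWord_length, hlen w hw, hlen z hz]; omega
              apply infix_of_getD t₀ (by omega)
              intro j hj
              rw [hval j hj, hpdef, suffpat_getD m hm x j (by omega), hxe]
            rcases hepm with he | he
            · rcases hx with h1 | h1 | h1
              · exact key (-1) v u hv hu
                  (Ne.symm hne) (by
                    intro k hk
                    rw [hplen] at hk
                    rw [hvu]
                    by_cases hkm : k = m - 1
                    · rw [hkm, hit, he]; simp
                    · rw [hdzero (t₀ + k) (by omega)]; simp [hkm]) h1
              · exact absurd h1 hx0
              · exact key 1 u v hu hv hne (by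
                    intro k hk
                    rw [hplen] at hk
                    by_cases hkm : k = m - 1
                    · rw [hkm, hit, he]; simp
                    · rw [hdzero (t₀ + k) (by omega)]; simp [hkm]) h1
            · rcases hx with h1 | h1 | h1
              · exact key (-1) u v hu hv hne (by
                    intro k hk
                    rw [hplen] at hk
                    by_cases hkm : k = m - 1
                    · rw [hkm, hit, he]; simp
                    · rw [hdzero (t₀ + k) (by omega)]; simp [hkm]) h1
              · exact absurd h1 hx0
              · exact key 1 v u hv hu (Ne.symm hne) (by
                    intro k hk
                    rw [hplen] at hk
                    rw [hvu]
                    by_cases hkm : k = m - 1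
                    · rw [hkm, hit, he]; simp
                    · rw [hdzero (t₀ + k) (by omega)]; simp [hkm]) h1
    _ = 3 ^ m := by simp [Finset.card_univ, Fintype.card_fun]

-- ===== Part 3: reversal, delta bounds =====

lemma avoids_reverse {p : List ℤ} {C : Finset (List Bool)} {n : ℕ}
    (hlen : ∀ u ∈ C, u.length = n) (h : AvoidsCode {p} C) :
    AvoidsCode {p.reverse} (C.image List.reverse) := by
  classical
  intro u' hu' v' hv' hne q hq
  simp only [Finset.mem_singleton] at hq
  subst hq
  obtain ⟨u, hu, rfl⟩ := Finset.mem_image.mp hu'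
  obtain ⟨v, hv, rfl⟩ := Finset.mem_image.mp hv'
  have hne' : u ≠ v := fun he => hne (by rw [he])
  intro hinf
  have hrev : diffWord u.reverse v.reverse = (diffWord u v).reverse := by
    rw [diffWord, diffWord, List.reverse_zipWith (by rw [hlen u hu, hlen v hv])]
  rw [hrev, List.reverse_infix] at hinf
  exact h u hu v hv hne' p (by simp) hinf

lemma delta_le_suffix {x : ℤ} (hx : x = -1 ∨ x = 0 ∨ x = 1) {m : ℕ} (hm : 1 ≤ m) (n : ℕ) :
    delta {List.replicate (m-1) (0:ℤ) ++ [x]} n ≤ 3 ^ m :=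
  delta_le _ n _ fun _ h1 h2 => card_le_of_avoids_suffix hx hm h1 h2

lemma delta_le_prefix {x : ℤ} (hx : x = -1 ∨ x = 0 ∨ x = 1) {m : ℕ} (hm : 1 ≤ m) (n : ℕ) :
    delta {[x] ++ List.replicate (m-1) (0:ℤ)} n ≤ 3 ^ m := by
  classical
  apply delta_le _ n _
  intro C h1 h2
  have hrev : ([x] ++ List.replicate (m-1) (0:ℤ)).reverse
      = List.replicate (m-1) (0:ℤ) ++ [x] := by simp
  have h3 := avoids_reverse h1 h2
  rw [hrev] at h3
  have h4 : ∀ u ∈ C.image List.reverse, u.length = n := by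
    intro u hu
    obtain ⟨w, hw, rfl⟩ := Finset.mem_image.mp hu
    simp [h1 w hw]
  have := card_le_of_avoids_suffix hx hm h4 h3
  rwa [Finset.card_image_of_injective _ List.reverse_injective] at this

-- ===== Part 4: cap = 0 from bounded delta =====

lemma cap_eq_zero_of_bounded (D : Finset (List ℤ)) (K : ℕ) (hK : 1 ≤ K)
    (h : ∀ n, delta D n ≤ K) : cap D = 0 := by
  have htend : Filter.Tendsto (fun n : ℕ => Real.logb 2 (delta D n) / n)
      Filter.atTop (nhds 0) := by
    apply tendsto_of_tendsto_of_tendsto_of_le_of_le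
      (g := fun _ : ℕ => (0:ℝ)) (h := fun n : ℕ => Real.logb 2 K / n)
      tendsto_const_nhds (tendsto_const_div_atTop_nhds_zero_nat _)
    · intro n
      apply div_nonneg _ (Nat.cast_nonneg n)
      apply Real.logb_nonneg (by norm_num)
      exact_mod_cast one_le_delta D n
    · intro n
      apply div_le_div_of_nonneg_right ?_ (Nat.cast_nonneg n)
      apply (Real.logb_le_logb (by norm_num) ?_ ?_).mpr
      · exact_mod_cast h n
      · exact_mod_cast one_le_delta D n
      · exact_mod_cast hK
  exact htend.limsup_eq

-- ===== Part 5: exponential codes =====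

lemma delta_ge_two_nonzero (p : List ℤ) (a b : ℕ) (hab : a < b) (hb : b < p.length)
    (hpa : p.getD a 0 ≠ 0) (hpb : p.getD b 0 ≠ 0) (n : ℕ) :
    2 ^ (n / (2 * (b - a))) ≤ delta {p} n := by
  classical
  set d := b - a with hd
  have hd1 : 1 ≤ d := by omega
  set q := n / (2 * d) with hq
  have hqn : 2 * d * q ≤ n := by rw [hq, Nat.mul_comm]; exact Nat.div_mul_le_self n (2*d)
  set yext : (Fin q → Bool) → ℕ → Bool :=
    fun y j => if h : j < q then y ⟨j, h⟩ else false with hyext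
  set w : (Fin q → Bool) → List Bool := fun y => List.ofFn (fun i : Fin n =>
    if ((i : ℕ) / d) % 2 = 1 ∧ (i : ℕ) / (2 * d) < q then yext y ((i : ℕ) / (2*d))
    else false) with hw
  have hwlen : ∀ y, (w y).length = n := by intro y; rw [hw]; simp
  have hwget : ∀ y k, k < n → (w y).getD k false =
      if (k / d) % 2 = 1 ∧ k / (2 * d) < q then yext y (k / (2*d)) else false := by
    intro y k hk
    rw [List.getD_eq_getElem _ _ (by rw [hwlen]; omega)]
    simp [hw]
  have hforced : ∀ y k, k < n → (k / d) % 2 = 0 → (w y).getD k false = false := by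
    intro y k hk hpar
    rw [hwget y k hk, if_neg]
    rintro ⟨h1, -⟩
    omega
  have hinj : Function.Injective w := by
    intro y y' he
    funext k
    have hkq : (k : ℕ) < q := k.isLt
    have hpos : 2*d*(k:ℕ) + d < n := by
      have h1 := Nat.mul_le_mul_left (2*d) (show (k:ℕ)+1 ≤ q by omega)
      rw [Nat.mul_add, Nat.mul_one] at h1
      omega
    have hdiv1 : (2*d*(k:ℕ) + d) / d = 2*(k:ℕ) + 1 := by
      have e : 2*d*(k:ℕ) + d = d*(2*(k:ℕ)+1) := by ring
      rw [e, Nat.mul_div_cancel_left _ (by omega)]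
    have hdiv2 : (2*d*(k:ℕ) + d) / (2*d) = (k:ℕ) := by
      have e : 2*d*(k:ℕ) + d = (2*d)*(k:ℕ) + d := by ring
      rw [e, Nat.mul_add_div (by omega), Nat.div_eq_of_lt (by omega), Nat.add_zero]
    have h1 := congrArg (fun l => l.getD (2*d*(k:ℕ) + d) false) he
    rw [hwget _ _ hpos, hwget _ _ hpos, if_pos (by rw [hdiv1, hdiv2]; omega),
      if_pos (by rw [hdiv1, hdiv2]; omega), hdiv2] at h1
    rw [hyext] at h1
    simp only [dif_pos hkq] at h1
    simpa using h1
  set C : Finset (List Bool) := Finset.image w Finset.univ with hC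
  have hlenC : ∀ u ∈ C, u.length = n := by
    intro u hu
    obtain ⟨y, -, rfl⟩ := Finset.mem_image.mp hu
    exact hwlen y
  have havC : AvoidsCode {p} C := by
    intro u hu v hv hne pp hpp hinf
    simp only [Finset.mem_singleton] at hpp
    rw [hpp] at hinf
    obtain ⟨y, -, rfl⟩ := Finset.mem_image.mp hu
    obtain ⟨y', -, rfl⟩ := Finset.mem_image.mp hv
    obtain ⟨t₀, hle, hval⟩ := getD_of_infix hinf
    rw [diffWord_length, hwlen, hwlen, Nat.min_self] at hle
    have hx2 : (t₀ + b) / d = (t₀ + a) / d + 1 := by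
      have e : t₀ + b = (t₀ + a) + d := by omega
      rw [e, Nat.add_div_right _ (by omega)]
    have hblock : ∀ j, j < p.length → p.getD j 0 ≠ 0 → ((t₀ + j) / d) % 2 = 0 → False := by
      intro j hj hpj hpar
      have hjn : t₀ + j < n := by omega
      have h0 : (diffWord (w y) (w y')).getD (t₀ + j) 0 = 0 := by
        rw [diffWord_getD (by rw [hwlen, hwlen]), hforced y _ hjn hpar,
          hforced y' _ hjn hpar, sub_self]
      rw [hval j hj] at h0
      exact hpj h0
    rcases Nat.even_or_odd ((t₀ + a) / d) with hev | hod
    · exact hblock a (by omega) hpa (Nat.even_iff.mp hev)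
    · apply hblock b (by omega) hpb
      rw [hx2]
      have := Nat.odd_iff.mp hod
      omega
  have hcard : C.card = 2 ^ q := by
    rw [hC, Finset.card_image_of_injective _ hinj, Finset.card_univ, Fintype.card_fun]
    simp
  calc 2 ^ (n / (2*d)) = C.card := by rw [hcard, hq]
    _ ≤ delta {p} n := le_delta _ n C hlenC havC

lemma delta_ge_interior (p : List ℤ) (a : ℕ) (ha1 : 1 ≤ a) (ha2 : a + 1 < p.length)
    (hpa : p.getD a 0 ≠ 0) (hprev : p.getD (a-1) 0 = 0) (hnext : p.getD (a+1) 0 = 0) (n : ℕ) :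
    2 ^ (n / 2) ≤ delta {p} n := by
  classical
  set q := n / 2 with hq
  set yext : (Fin q → Bool) → ℕ → Bool :=
    fun y j => if h : j < q then y ⟨j, h⟩ else false with hyext
  set w : (Fin q → Bool) → List Bool :=
    fun y => List.ofFn (fun i : Fin n => yext y ((i : ℕ)/2)) with hw
  have hwlen : ∀ y, (w y).length = n := by intro y; rw [hw]; simp
  have hwget : ∀ y k, k < n → (w y).getD k false = yext y (k/2) := by
    intro y k hk
    rw [List.getD_eq_getElem _ _ (by rw [hwlen]; omega)]
    simp [hw]
  have hinj : Function.Injective w := by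
    intro y y' he
    funext k
    have hkq : (k : ℕ) < q := k.isLt
    have hpos : 2*(k:ℕ) < n := by omega
    have h1 := congrArg (fun l => l.getD (2*(k:ℕ)) false) he
    rw [hwget _ _ hpos, hwget _ _ hpos] at h1
    have e : 2*(k:ℕ)/2 = (k:ℕ) := by omega
    rw [e, hyext] at h1
    simp only [dif_pos hkq] at h1
    simpa using h1
  set C : Finset (List Bool) := Finset.image w Finset.univ with hC
  have hlenC : ∀ u ∈ C, u.length = n := by
    intro u hu
    obtain ⟨y, -, rfl⟩ := Finset.mem_image.mp hu
    exact hwlen y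
  have havC : AvoidsCode {p} C := by
    intro u hu v hv hne pp hpp hinf
    simp only [Finset.mem_singleton] at hpp
    rw [hpp] at hinf
    obtain ⟨y, -, rfl⟩ := Finset.mem_image.mp hu
    obtain ⟨y', -, rfl⟩ := Finset.mem_image.mp hv
    obtain ⟨t₀, hle, hval⟩ := getD_of_infix hinf
    rw [diffWord_length, hwlen, hwlen, Nat.min_self] at hle
    have hdiff : ∀ k k', k < n → k' < n → k/2 = k'/2 →
        (diffWord (w y) (w y')).getD k 0 = (diffWord (w y) (w y')).getD k' 0 := by
      intro k k' hk hk' hkk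
      rw [diffWord_getD (by rw [hwlen, hwlen]), diffWord_getD (by rw [hwlen, hwlen]),
        hwget y _ hk, hwget y' _ hk, hwget y _ hk', hwget y' _ hk', hkk]
    have hxa : (diffWord (w y) (w y')).getD (t₀ + a) 0 ≠ 0 := by
      rw [hval a (by omega)]; exact hpa
    have hxn : t₀ + a < n := by omega
    rcases Nat.even_or_odd (t₀ + a) with hev | hod
    · -- partner is t₀ + a + 1
      have hmod : (t₀ + a)/2 = (t₀ + (a+1))/2 := by
        obtain ⟨c, hc⟩ := hev; omega
      have h0 : (diffWord (w y) (w y')).getD (t₀ + (a+1)) 0 = 0 := by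
        rw [hval (a+1) (by omega)]; exact hnext
      exact hxa (by rw [hdiff _ _ hxn (by omega) hmod, h0])
    · -- partner is t₀ + a - 1 = t₀ + (a-1)
      have hmod : (t₀ + a)/2 = (t₀ + (a-1))/2 := by
        obtain ⟨c, hc⟩ := hod; omega
      have h0 : (diffWord (w y) (w y')).getD (t₀ + (a-1)) 0 = 0 := by
        rw [hval (a-1) (by omega)]; exact hprev
      exact hxa (by rw [hdiff _ _ hxn (by omega) hmod, h0])
  have hcard : C.card = 2 ^ q := by
    rw [hC, Finset.card_image_of_injective _ hinj, Finset.card_univ, Fintype.card_fun]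
    simp
  calc 2 ^ (n/2) = C.card := by rw [hcard, hq]
    _ ≤ delta {p} n := le_delta _ n C hlenC havC

-- ===== Part 6: positive capacity from exponential codes =====

lemma cap_bddAbove (D : Finset (List ℤ)) :
    Filter.IsBoundedUnder (· ≤ ·) Filter.atTop
      (fun n : ℕ => Real.logb 2 (delta D n) / n) := by
  refine Filter.isBoundedUnder_of ⟨Real.logb 2 3, ?_⟩
  intro n
  have h3 : (0:ℝ) ≤ Real.logb 2 3 := Real.logb_nonneg (by norm_num) (by norm_num)
  rcases Nat.eq_zero_or_pos n with hn | hn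
  · simp [hn, h3]
  · have hlog : Real.logb 2 (delta D n) ≤ n * Real.logb 2 3 := by
      have h1 : Real.logb 2 (delta D n) ≤ Real.logb 2 ((3:ℝ)^n) := by
        apply (Real.logb_le_logb (by norm_num) ?_ ?_).mpr
        · exact_mod_cast delta_le_pow D n
        · exact_mod_cast one_le_delta D n
        · positivity
      rwa [Real.logb_pow] at h1
    rw [div_le_iff₀ (by exact_mod_cast hn)]
    calc Real.logb 2 (delta D n) ≤ n * Real.logb 2 3 := hlog
      _ = Real.logb 2 3 * n := by ring

lemma cap_pos_of_delta_ge (D : Finset (List ℤ)) (M : ℕ) (hM : 1 ≤ M)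
    (h : ∀ n, 2 ^ (n / M) ≤ delta D n) : 0 < cap D := by
  have hfreq : ∀ᶠ n in Filter.atTop,
      1 / (2 * (M:ℝ)) ≤ Real.logb 2 (delta D n) / n := by
    filter_upwards [Filter.eventually_ge_atTop (2*M)] with n hn
    have hn0 : 0 < n := by omega
    have hkey : n ≤ 2 * (M * (n / M)) := by
      have hdm := Nat.div_add_mod n M
      have hr : n % M < M := Nat.mod_lt _ (by omega)
      omega
    have hlog : ((n / M : ℕ) : ℝ) ≤ Real.logb 2 (delta D n) := by
      have h1 : Real.logb 2 ((2:ℝ)^(n/M)) ≤ Real.logb 2 (delta D n) := by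
        apply (Real.logb_le_logb (by norm_num) (by positivity) ?_).mpr
        · exact_mod_cast h n
        · have := one_le_delta D n; exact_mod_cast (by omega : 1 ≤ delta D n)
      rwa [Real.logb_pow, Real.logb_self_eq_one (b := 2) (by norm_num), mul_one] at h1
    have hstep : 1 / (2 * (M:ℝ)) ≤ ((n / M : ℕ) : ℝ) / n := by
      rw [div_le_div_iff₀ (by positivity) (by exact_mod_cast hn0)]
      have : (n:ℝ) ≤ 2 * ((M:ℝ) * ((n / M : ℕ) : ℝ)) := by exact_mod_cast hkey
      nlinarith
    calc 1 / (2 * (M:ℝ)) ≤ ((n / M : ℕ) : ℝ) / n := hstep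
      _ ≤ Real.logb 2 (delta D n) / n :=
        div_le_div_of_nonneg_right hlog (Nat.cast_nonneg n)
  have hle : 1 / (2 * (M:ℝ)) ≤ cap D :=
    Filter.le_limsup_of_frequently_le hfreq.frequently (cap_bddAbove D)
  have : (0:ℝ) < 1 / (2 * (M:ℝ)) := by positivity
  linarith

-- ===== Part 7: main theorem =====


/-- for a single pattern `p` of length `m`, `cap({p}) = 0` iff `p`
contains at least `m-1` consecutive zeros. -/
theorem singleton_zero_capacity_iff (m : ℕ) (hm : 1 ≤ m) (p : List ℤ)
    (hp : IsPattern p) (hlen : p.length = m) :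
    cap {p} = 0 ↔ List.replicate (m - 1) (0:ℤ) <:+: p := by
  constructor
  · intro hcap
    by_contra hni
    -- nonzero entry among first m-1 positions
    have hA : ∃ i, i < m - 1 ∧ p.getD i 0 ≠ 0 := by
      by_contra hall
      push_neg at hall
      apply hni
      have he : List.replicate (m - 1) (0:ℤ) = p.take (m - 1) := by
        apply List.ext_getElem (by simp; omega)
        intro k h1 h2
        rw [List.getElem_replicate, List.getElem_take]
        have hk : k < m - 1 := by simpa using h1
        have := hall k hk
        rw [List.getD_eq_getElem _ _ (by omega)] at this
        exact this.symm
      rw [he]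
      exact (p.take_prefix (m-1)).isInfix
    -- nonzero entry among last m-1 positions
    have hB : ∃ j, 1 ≤ j ∧ j < m ∧ p.getD j 0 ≠ 0 := by
      by_contra hall
      push_neg at hall
      apply hni
      have he : List.replicate (m - 1) (0:ℤ) = p.drop 1 := by
        apply List.ext_getElem (by simp; omega)
        intro k h1 h2
        rw [List.getElem_replicate, List.getElem_drop]
        have hk : k < m - 1 := by simpa using h1
        have := hall (1 + k) (by omega) (by omega)
        rw [List.getD_eq_getElem _ _ (by omega)] at this
        exact this.symm
      rw [he]
      exact (p.drop_suffix 1).isInfix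
    have hpos : 0 < cap {p} := by
      by_cases hAB : ∃ a b, a < b ∧ b < p.length ∧ p.getD a 0 ≠ 0 ∧ p.getD b 0 ≠ 0
      · obtain ⟨a, b, hab, hb, hpa, hpb⟩ := hAB
        exact cap_pos_of_delta_ge {p} (2*(b-a)) (by omega)
          (fun n => delta_ge_two_nonzero p a b hab hb hpa hpb n)
      · push_neg at hAB
        obtain ⟨i, hi1, hi2⟩ := hA
        obtain ⟨j, hj0, hj1, hj2⟩ := hB
        have hij : i = j := by
          rcases lt_trichotomy i j with h | h | h
          · exact absurd (hAB i j h (by omega) hi2) hj2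
          · exact h
          · exact absurd (hAB j i h (by omega) hj2) hi2
        subst hij
        have hprev : p.getD (i-1) 0 = 0 := by
          by_contra hne
          exact hi2 (hAB (i-1) i (by omega) (by omega) hne)
        have hnext : p.getD (i+1) 0 = 0 := hAB i (i+1) (by omega) (by omega) hi2
        exact cap_pos_of_delta_ge {p} 2 (by omega)
          (fun n => delta_ge_interior p i (by omega) (by omega) hi2 hprev hnext n)
    exact absurd hcap hpos.ne'
  · intro hinf
    obtain ⟨s, t, hst⟩ := hinf
    have hlst : s.length + (m - 1) + t.length = m := by
      have := congrArg List.length hst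
      simp only [List.length_append, List.length_replicate, hlen] at this
      omega
    rcases Nat.eq_zero_or_pos s.length with hs | hs
    · -- p = replicate (m-1) 0 ++ [x]
      have hsl : s = [] := List.length_eq_zero_iff.mp hs
      have htl : t.length = 1 := by omega
      obtain ⟨x, rfl⟩ := List.length_eq_one_iff.mp htl
      subst hsl
      simp only [List.nil_append] at hst
      have hx : x = -1 ∨ x = 0 ∨ x = 1 := hp.2 x (by rw [← hst]; simp)
      apply cap_eq_zero_of_bounded {p} (3^m) (Nat.one_le_pow _ _ (by norm_num))
      intro n
      rw [← hst]
      exact delta_le_suffix hx hm n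
    · -- p = [x] ++ replicate (m-1) 0
      have htl : t = [] := List.length_eq_zero_iff.mp (by omega)
      have hsl : s.length = 1 := by omega
      obtain ⟨x, rfl⟩ := List.length_eq_one_iff.mp hsl
      subst htl
      simp only [List.append_nil] at hst
      have hx : x = -1 ∨ x = 0 ∨ x = 1 := hp.2 x (by rw [← hst]; simp)
      apply cap_eq_zero_of_bounded {p} (3^m) (Nat.one_le_pow _ _ (by norm_num))
      intro n
      rw [← hst]
      exact delta_le_prefix hx hm n
end
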